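/- arXiv:1804.02071 — 3 statements merged into one kernel-verified Lean document; each statement's English description precedes it below -/
import Mathlib

section
/- Let $1 \le k \le n$ and let $\{X_i^j : 1 \le i \le n, 1 \le j \le k\}$ be independent random variables. For each $(i_1,\ldots,i_k) \in I_n^k$ let $\Phi_{i_1,\ldots,i_k} : S^k \to \mathbb{R}$ be measurable. Then $\log \mathbb{E} \exp\Big( \frac{(n-k)!}{n!} \sum_{(i_1,\ldots,i_k)\in I_n^k} \Phi_{i_1,\ldots,i_k}(X_{i_1}^1,\ldots,X_{i_k}^k) \Big) \le \frac{(n-k+1)!}{n!} \sum_{(i_1,\ldots,i_k)\in I_n^k} \log \mathbb{E} \exp\Big( \frac{1}{n-k+1} \Phi_{i_1,\ldots,i_k}(X_{i_1}^1,\ldots,X_{i_k}^k) \Big)$, provided the relevant exponential moments are finite. -/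
open MeasureTheory ProbabilityTheory Real Filter Topology

/-- Any two embeddings into a finite type are related by a permutation. -/
lemma exists_perm_comp_eq {α : Type*} {β : Type*} [Finite β] (u v : α ↪ β) :
    ∃ σ : Equiv.Perm β, ∀ j, σ (u j) = v j := by
  classical
  let E : {x // x ∈ Set.range u} ≃ {x // x ∈ Set.range v} :=
    (Equiv.ofInjective u u.injective).symm.trans (Equiv.ofInjective v v.injective)
  refine ⟨E.extendSubtype, fun j => ?_⟩
  rw [E.extendSubtype_apply_of_mem _ (Set.mem_range_self j)]
  have : E ⟨u j, Set.mem_range_self j⟩ = ⟨v j, Set.mem_range_self j⟩ := by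
    simp only [E, Equiv.trans_apply]
    rw [Equiv.ofInjective_symm_apply u.injective j]
    rfl
  rw [this]

/-- Summing `f (u.trans σ)` over all permutations `σ` gives `(n-k)!` times the sum of `f`
over all embeddings. -/
lemma sum_perm_trans {n k : ℕ} (hkn : k ≤ n) (u : Fin k ↪ Fin n) (f : (Fin k ↪ Fin n) → ℝ) :
    ∑ σ : Equiv.Perm (Fin n), f (u.trans σ.toEmbedding)
      = ((n - k).factorial : ℝ) * ∑ e : Fin k ↪ Fin n, f e := by
  classical
  have hconst : ∀ v : Fin k ↪ Fin n,
      ∑ σ : Equiv.Perm (Fin n), f (v.trans σ.toEmbedding)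
        = ∑ σ : Equiv.Perm (Fin n), f (u.trans σ.toEmbedding) := by
    intro v
    obtain ⟨τ, hτ⟩ := exists_perm_comp_eq u v
    rw [← Equiv.sum_comp (Equiv.mulRight τ)
      (fun σ : Equiv.Perm (Fin n) => f (u.trans σ.toEmbedding))]
    refine Finset.sum_congr rfl fun σ _ => ?_
    congr 1
    ext j
    simp [Equiv.Perm.mul_apply, hτ j]
  have hswap : ∑ e : Fin k ↪ Fin n, ∑ σ : Equiv.Perm (Fin n), f (e.trans σ.toEmbedding)
      = (n.factorial : ℝ) * ∑ e : Fin k ↪ Fin n, f e := by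
    have h1 : ∀ σ : Equiv.Perm (Fin n),
        ∑ e : Fin k ↪ Fin n, f (e.trans σ.toEmbedding) = ∑ e : Fin k ↪ Fin n, f e := by
      intro σ
      apply Fintype.sum_bijective (fun e : Fin k ↪ Fin n => e.trans σ.toEmbedding)
      · constructor
        · intro e₁ e₂ h
          ext j
          have := congrArg (fun e : Fin k ↪ Fin n => σ.symm (e j)) h
          simpa using congrArg Fin.val this
        · intro e
          exact ⟨e.trans σ.symm.toEmbedding, by ext j; simp⟩
      · intro e; rfl
    rw [Finset.sum_comm, Finset.sum_congr rfl (fun σ _ => h1 σ), Finset.sum_const,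
      nsmul_eq_mul, Finset.card_univ, Fintype.card_perm, Fintype.card_fin]
  have hcard : (Fintype.card (Fin k ↪ Fin n) : ℝ) = (n.descFactorial k : ℝ) := by
    rw [Fintype.card_embedding_eq, Fintype.card_fin, Fintype.card_fin]
  have h2 : ∑ e : Fin k ↪ Fin n, ∑ σ : Equiv.Perm (Fin n), f (e.trans σ.toEmbedding)
      = (n.descFactorial k : ℝ) * ∑ σ : Equiv.Perm (Fin n), f (u.trans σ.toEmbedding) := by
    rw [Finset.sum_congr rfl (fun v _ => hconst v), Finset.sum_const, nsmul_eq_mul, ← hcard,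
      Finset.card_univ]
  rw [h2] at hswap
  have hD0 : n.descFactorial k ≠ 0 := fun h =>
    absurd (Nat.descFactorial_eq_zero_iff_lt.mp h) (not_lt.mpr hkn)
  have hD : (n.descFactorial k : ℝ) ≠ 0 := Nat.cast_ne_zero.mpr hD0
  have hfac : (n.factorial : ℝ) = ((n - k).factorial : ℝ) * (n.descFactorial k : ℝ) := by
    exact_mod_cast congrArg (Nat.cast (R := ℝ)) (Nat.factorial_mul_descFactorial hkn).symm
  apply mul_left_cancel₀ hD
  rw [hswap, hfac]; ring

set_option maxHeartbeats 2000000 in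
/-- Exponential decoupled inequality (Lemma on decoupled `U`-statistics): for independent
random variables `X_i^j` (`1 ≤ i ≤ n`, `1 ≤ j ≤ k`) and measurable kernels `Φ_{i₁,…,i_k}`
indexed by tuples of pairwise distinct indices (embeddings `e : Fin k ↪ Fin n`),
`log E exp( ((n-k)!/n!) ∑_e Φ_e(X_{e 1}^1,…,X_{e k}^k) )
  ≤ ((n-k+1)!/n!) ∑_e log E exp( (n-k+1)⁻¹ Φ_e(X_{e 1}^1,…,X_{e k}^k) )`,
provided the relevant exponential moments are finite.  Here `(n-k)!/n! = 1/(n)_k` and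
`(n-k+1)!/n! = 1/(n)_{k-1}` with `(n)_j` the descending factorial. -/
theorem decoupled_exp_log_ineq {Ω S : Type*} [MeasurableSpace Ω] [MeasurableSpace S]
    (μ : Measure Ω) [IsProbabilityMeasure μ] (n k : ℕ) (hk : 1 ≤ k) (hkn : k ≤ n)
    (X : Fin n → Fin k → Ω → S) (hmeas : ∀ i j, Measurable (X i j))
    (hindep : iIndepFun
      (fun p : Fin n × Fin k => X p.1 p.2) μ)
    (Φ : (Fin k ↪ Fin n) → (Fin k → S) → ℝ) (hΦ : ∀ e, Measurable (Φ e))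
    (hint1 : ∀ e : Fin k ↪ Fin n,
      Integrable (fun ω => exp (((n : ℝ) - k + 1)⁻¹ * Φ e (fun j => X (e j) j ω))) μ)
    (hint2 : Integrable (fun ω =>
      exp ((n.descFactorial k : ℝ)⁻¹ * ∑ e : Fin k ↪ Fin n, Φ e (fun j => X (e j) j ω))) μ) :
    log (∫ ω, exp ((n.descFactorial k : ℝ)⁻¹ *
        ∑ e : Fin k ↪ Fin n, Φ e (fun j => X (e j) j ω)) ∂μ)
      ≤ (n.descFactorial (k - 1) : ℝ)⁻¹ * ∑ e : Fin k ↪ Fin n,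
          log (∫ ω, exp (((n : ℝ) - k + 1)⁻¹ * Φ e (fun j => X (e j) j ω)) ∂μ) := by
  classical
  set c : ℝ := ((n : ℝ) - k + 1)⁻¹ with hc
  set Y : (Fin k ↪ Fin n) → Ω → ℝ := fun e ω => Φ e (fun j => X (e j) j ω) with hY
  have hYmeas : ∀ e, Measurable (Y e) := fun e =>
    (hΦ e).comp (measurable_pi_lambda _ fun j => hmeas (e j) j)
  have hcast : ((n - k + 1 : ℕ) : ℝ) = (n : ℝ) - k + 1 := by
    push_cast [Nat.cast_sub hkn]; ring
  have hcpos : (0 : ℝ) < (n : ℝ) - k + 1 := by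
    rw [← hcast]; exact_mod_cast Nat.succ_pos _
  have hlt : ∀ (t : Fin (n - k + 1)) (j : Fin k), t.1 + j.1 < n := fun t j => by
    have := t.isLt; have := j.isLt; omega
  set emb : Fin (n - k + 1) → (Fin k ↪ Fin n) := fun t =>
    ⟨fun j => ⟨t.1 + j.1, hlt t j⟩, fun j j' h => by
      have : t.1 + j.1 = t.1 + j'.1 := congrArg Fin.val h
      exact Fin.ext (by omega)⟩ with hemb
  set w : Equiv.Perm (Fin n) → Fin (n - k + 1) → (Fin k ↪ Fin n) :=
    fun σ t => (emb t).trans σ.toEmbedding with hw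
  have hint1' : ∀ e, Integrable (fun ω => exp (c * Y e ω)) μ := fun e => hint1 e
  -- counting identity
  have K1 : ∀ f : (Fin k ↪ Fin n) → ℝ,
      ∑ σ : Equiv.Perm (Fin n), ∑ t : Fin (n - k + 1), f (w σ t)
        = (((n - k + 1) * (n - k).factorial : ℕ) : ℝ) * ∑ e : Fin k ↪ Fin n, f e := by
    intro f
    rw [Finset.sum_comm]
    rw [Finset.sum_congr rfl (fun t _ => sum_perm_trans hkn (emb t) f)]
    rw [Finset.sum_const, nsmul_eq_mul, Finset.card_univ, Fintype.card_fin]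
    push_cast; ring
  -- disjoint dependence sets
  set A : Equiv.Perm (Fin n) → Fin (n - k + 1) → Finset (Fin n × Fin k) :=
    fun σ t => Finset.image (fun j => (w σ t j, j)) Finset.univ with hA
  have hAdisj : ∀ σ, ∀ t t' : Fin (n - k + 1), t ≠ t' → Disjoint (A σ t) (A σ t') := by
    intro σ t t' htt'
    rw [Finset.disjoint_left]
    rintro p hp hp'
    obtain ⟨j, -, rfl⟩ := Finset.mem_image.mp hp
    obtain ⟨j', -, hj'⟩ := Finset.mem_image.mp hp'
    have hj2 : j'.1 = j.1 := congrArg (fun q : Fin n × Fin k => q.2.1) hj'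
    have h1 : σ (emb t' j') = σ (emb t j) := congrArg Prod.fst hj'
    have h2 : emb t' j' = emb t j := σ.injective h1
    have h3 : t'.1 + j'.1 = t.1 + j.1 := congrArg Fin.val h2
    exact htt' (Fin.ext (by omega)).symm
  -- independence: expectation of products over a window family factorizes
  have K2 : ∀ σ : Equiv.Perm (Fin n), ∀ s : Finset (Fin (n - k + 1)),
      Integrable (fun ω => ∏ t ∈ s, exp (c * Y (w σ t) ω)) μ ∧
      ∫ ω, ∏ t ∈ s, exp (c * Y (w σ t) ω) ∂μ
        = ∏ t ∈ s, ∫ ω, exp (c * Y (w σ t) ω) ∂μ := by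
    intro σ s
    induction s using Finset.induction_on with
    | empty => simp
    | @insert t₀ s ht₀ ih =>
      have hmem0 : ∀ j : Fin k, (w σ t₀ j, j) ∈ A σ t₀ := fun j =>
        Finset.mem_image_of_mem _ (Finset.mem_univ j)
      have hmemS : ∀ (t : Fin (n - k + 1)), t ∈ s → ∀ j : Fin k,
          (w σ t j, j) ∈ s.biUnion (A σ) := fun t ht j =>
        Finset.mem_biUnion.mpr ⟨t, ht, Finset.mem_image_of_mem _ (Finset.mem_univ j)⟩
      have hdisj : Disjoint (A σ t₀) (s.biUnion (A σ)) := by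
        rw [Finset.disjoint_biUnion_right]
        exact fun t ht => hAdisj σ t₀ t (fun h => ht₀ (h ▸ ht))
      have base := hindep.indepFun_finset (A σ t₀) (s.biUnion (A σ)) hdisj
        (fun p => hmeas p.1 p.2)
      set φ : ({ p // p ∈ A σ t₀ } → S) → ℝ :=
        fun v => exp (c * Φ (w σ t₀) (fun j => v ⟨(w σ t₀ j, j), hmem0 j⟩)) with hφdef
      set ψ : ({ p // p ∈ s.biUnion (A σ) } → S) → ℝ :=
        fun v => ∏ t ∈ s.attach,
          exp (c * Φ (w σ t.1) (fun j => v ⟨(w σ t.1 j, j), hmemS t.1 t.2 j⟩)) with hψdef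
      have hφ : Measurable φ :=
        (Real.measurable_exp.comp (((hΦ _).comp
          (measurable_pi_lambda _ fun j => measurable_pi_apply _)).const_mul c))
      have hψ : Measurable ψ := Finset.measurable_prod _ fun t _ =>
        (Real.measurable_exp.comp (((hΦ _).comp
          (measurable_pi_lambda _ fun j => measurable_pi_apply _)).const_mul c))
      have hIndep : IndepFun (fun ω => exp (c * Y (w σ t₀) ω))
          (fun ω => ∏ t ∈ s, exp (c * Y (w σ t) ω)) μ := by
        have hcomp := base.comp hφ hψ
        have e1 : (fun ω => exp (c * Y (w σ t₀) ω))
            = φ ∘ (fun a (i : {p // p ∈ A σ t₀}) => X i.1.1 i.1.2 a) := rfl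
        have e2 : (fun ω => ∏ t ∈ s, exp (c * Y (w σ t) ω))
            = ψ ∘ (fun a (i : {p // p ∈ s.biUnion (A σ)}) => X i.1.1 i.1.2 a) := by
          funext ω
          exact (Finset.prod_attach s fun t => exp (c * Y (w σ t) ω)).symm
        rw [e1, e2]; exact hcomp
      constructor
      · rw [show (fun ω => ∏ t ∈ insert t₀ s, exp (c * Y (w σ t) ω))
            = (fun ω => exp (c * Y (w σ t₀) ω)) * (fun ω => ∏ t ∈ s, exp (c * Y (w σ t) ω))
            from funext fun ω => by rw [Finset.prod_insert ht₀]; rfl]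
        exact hIndep.integrable_mul (hint1' _) ih.1
      · calc ∫ ω, ∏ t ∈ insert t₀ s, exp (c * Y (w σ t) ω) ∂μ
            = ∫ ω, ((fun ω => exp (c * Y (w σ t₀) ω))
                * (fun ω => ∏ t ∈ s, exp (c * Y (w σ t) ω))) ω ∂μ := by
              congr 1; funext ω; rw [Finset.prod_insert ht₀]; rfl
          _ = (∫ ω, exp (c * Y (w σ t₀) ω) ∂μ) * ∫ ω, ∏ t ∈ s, exp (c * Y (w σ t) ω) ∂μ :=
              hIndep.integral_mul_eq_mul_integral (hint1' _).aestronglyMeasurable ih.1.aestronglyMeasurable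
          _ = ∏ t ∈ insert t₀ s, ∫ ω, exp (c * Y (w σ t) ω) ∂μ := by
              rw [ih.2, Finset.prod_insert ht₀]
  -- abbreviations for the one-window moments
  set G : (Fin k ↪ Fin n) → ℝ := fun e => ∫ ω, exp (c * Y e ω) ∂μ with hG
  have hGpos : ∀ e, 0 < G e := by
    intro e
    rw [hG]
    rw [integral_pos_iff_support_of_nonneg (fun ω => (exp_pos _).le) (hint1' e)]
    have hsupp : Function.support (fun ω => exp (c * Y e ω)) = Set.univ := by
      ext ω; simp [Function.support, (exp_pos _).ne']
    rw [hsupp, measure_univ]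
    norm_num
  -- exp of window sums as products
  have hZprod : ∀ (σ : Equiv.Perm (Fin n)) (ω : Ω),
      exp (c * ∑ t : Fin (n - k + 1), Y (w σ t) ω)
        = ∏ t : Fin (n - k + 1), exp (c * Y (w σ t) ω) := by
    intro σ ω; rw [Finset.mul_sum, Real.exp_sum]
  have hZint : ∀ σ : Equiv.Perm (Fin n),
      Integrable (fun ω => exp (c * ∑ t : Fin (n - k + 1), Y (w σ t) ω)) μ := by
    intro σ; simp only [hZprod]; exact (K2 σ Finset.univ).1
  have hZeq : ∀ σ : Equiv.Perm (Fin n),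
      ∫ ω, exp (c * ∑ t : Fin (n - k + 1), Y (w σ t) ω) ∂μ
        = ∏ t : Fin (n - k + 1), G (w σ t) := by
    intro σ; simp only [hZprod]; exact (K2 σ Finset.univ).2
  -- numerical facts
  set q : ℝ := ((n.factorial : ℝ))⁻¹ with hq
  have hnfacpos : (0:ℝ) < (n.factorial : ℝ) := by exact_mod_cast n.factorial_pos
  have hD0 : n.descFactorial k ≠ 0 := fun h =>
    absurd (Nat.descFactorial_eq_zero_iff_lt.mp h) (not_lt.mpr hkn)
  have hDpos : (0:ℝ) < (n.descFactorial k : ℝ) := by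
    exact_mod_cast Nat.pos_of_ne_zero hD0
  have hfac : ((n - k).factorial : ℝ) * (n.descFactorial k : ℝ) = (n.factorial : ℝ) := by
    exact_mod_cast Nat.factorial_mul_descFactorial hkn
  have hqsum : ∑ _σ : Equiv.Perm (Fin n), q = 1 := by
    rw [Finset.sum_const, nsmul_eq_mul, Finset.card_univ, Fintype.card_perm, Fintype.card_fin,
      hq, mul_inv_cancel₀ (ne_of_gt hnfacpos)]
  have hcoef : q * (c * (((n - k + 1) * (n - k).factorial : ℕ) : ℝ))
      = (n.descFactorial k : ℝ)⁻¹ := by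
    push_cast [hcast]
    rw [hq, hc]
    field_simp
    nlinarith [hfac, hcpos, hnfacpos]
  -- pointwise Hölder decomposition
  have hP : ∀ ω : Ω, exp ((n.descFactorial k : ℝ)⁻¹ * ∑ e : Fin k ↪ Fin n, Y e ω)
      = ∏ σ : Equiv.Perm (Fin n),
          (exp (c * ∑ t : Fin (n - k + 1), Y (w σ t) ω)) ^ q := by
    intro ω
    have h1 : ∀ σ : Equiv.Perm (Fin n),
        (exp (c * ∑ t : Fin (n - k + 1), Y (w σ t) ω)) ^ q
          = exp (q * (c * ∑ t : Fin (n - k + 1), Y (w σ t) ω)) := fun σ => by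
      rw [Real.rpow_def_of_pos (exp_pos _), Real.log_exp, mul_comm]
    rw [Finset.prod_congr rfl (fun σ _ => h1 σ), ← Real.exp_sum]
    congr 1
    rw [← Finset.mul_sum, ← Finset.mul_sum, ← mul_assoc, mul_assoc,
      K1 (fun e => Y e ω), ← mul_assoc, ← mul_assoc]
    rw [show q * c * (((n - k + 1) * (n - k).factorial : ℕ) : ℝ)
      = q * (c * (((n - k + 1) * (n - k).factorial : ℕ) : ℝ)) from by ring, hcoef]
  -- Hölder inequality over permutations
  have hfmeas : ∀ σ : Equiv.Perm (Fin n),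
      Measurable (fun ω => exp (c * ∑ t : Fin (n - k + 1), Y (w σ t) ω)) := fun σ =>
    Real.measurable_exp.comp ((Finset.measurable_sum _ fun t _ => hYmeas (w σ t)).const_mul c)
  have holder : ∫⁻ ω, ENNReal.ofReal
        (exp ((n.descFactorial k : ℝ)⁻¹ * ∑ e : Fin k ↪ Fin n, Y e ω)) ∂μ
      ≤ ∏ σ : Equiv.Perm (Fin n),
          (∫⁻ ω, ENNReal.ofReal (exp (c * ∑ t : Fin (n - k + 1), Y (w σ t) ω)) ∂μ) ^ q := by
    have heq : ∀ ω : Ω, ENNReal.ofReal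
          (exp ((n.descFactorial k : ℝ)⁻¹ * ∑ e : Fin k ↪ Fin n, Y e ω))
        = ∏ σ : Equiv.Perm (Fin n),
            (ENNReal.ofReal (exp (c * ∑ t : Fin (n - k + 1), Y (w σ t) ω))) ^ q := by
      intro ω
      rw [hP ω, ENNReal.ofReal_prod_of_nonneg
        (fun σ _ => Real.rpow_nonneg (exp_pos _).le q)]
      exact Finset.prod_congr rfl fun σ _ => (ENNReal.ofReal_rpow_of_pos (exp_pos _)).symm
    calc ∫⁻ ω, ENNReal.ofReal
          (exp ((n.descFactorial k : ℝ)⁻¹ * ∑ e : Fin k ↪ Fin n, Y e ω)) ∂μ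
        = ∫⁻ ω, ∏ σ : Equiv.Perm (Fin n),
            (ENNReal.ofReal (exp (c * ∑ t : Fin (n - k + 1), Y (w σ t) ω))) ^ q ∂μ := by
          congr 1; funext ω; exact heq ω
      _ ≤ _ := ENNReal.lintegral_prod_norm_pow_le _
          (fun σ _ => ((hfmeas σ).ennreal_ofReal).aemeasurable) hqsum
          (fun σ _ => inv_nonneg.mpr hnfacpos.le)
  -- identify the lintegrals
  have hFval : ∀ σ : Equiv.Perm (Fin n),
      ∫⁻ ω, ENNReal.ofReal (exp (c * ∑ t : Fin (n - k + 1), Y (w σ t) ω)) ∂μ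
        = ENNReal.ofReal (∏ t : Fin (n - k + 1), G (w σ t)) := fun σ => by
    rw [← ofReal_integral_eq_lintegral_ofReal (hZint σ)
      (Filter.Eventually.of_forall fun ω => (exp_pos _).le), hZeq σ]
  have hQpos : ∀ σ : Equiv.Perm (Fin n), 0 < ∏ t : Fin (n - k + 1), G (w σ t) := fun σ =>
    Finset.prod_pos fun t _ => hGpos _
  -- pass to real integrals
  have hIeq : ∫ ω, exp ((n.descFactorial k : ℝ)⁻¹ * ∑ e : Fin k ↪ Fin n, Y e ω) ∂μ
      = (∫⁻ ω, ENNReal.ofReal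
          (exp ((n.descFactorial k : ℝ)⁻¹ * ∑ e : Fin k ↪ Fin n, Y e ω)) ∂μ).toReal := by
    refine integral_eq_lintegral_of_nonneg_ae
      (Filter.Eventually.of_forall fun ω => (exp_pos _).le) ?_
    exact (Real.measurable_exp.comp ((Finset.measurable_sum _
      fun e _ => hYmeas e).const_mul _)).aestronglyMeasurable
  have hRne : (∏ σ : Equiv.Perm (Fin n),
      (∫⁻ ω, ENNReal.ofReal (exp (c * ∑ t : Fin (n - k + 1), Y (w σ t) ω)) ∂μ) ^ q) ≠ ⊤ := by
    refine ENNReal.prod_ne_top fun σ _ => ?_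
    rw [hFval σ]
    exact ENNReal.rpow_ne_top_of_nonneg (inv_nonneg.mpr hnfacpos.le) ENNReal.ofReal_ne_top
  have hIle : ∫ ω, exp ((n.descFactorial k : ℝ)⁻¹ * ∑ e : Fin k ↪ Fin n, Y e ω) ∂μ
      ≤ ∏ σ : Equiv.Perm (Fin n), (∏ t : Fin (n - k + 1), G (w σ t)) ^ q := by
    rw [hIeq]
    refine le_trans (ENNReal.toReal_mono hRne holder) ?_
    rw [ENNReal.toReal_prod]
    refine le_of_eq (Finset.prod_congr rfl fun σ _ => ?_)
    rw [hFval σ, ← ENNReal.toReal_rpow, ENNReal.toReal_ofReal (hQpos σ).le]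
  have hIpos : 0 < ∫ ω, exp ((n.descFactorial k : ℝ)⁻¹ * ∑ e : Fin k ↪ Fin n, Y e ω) ∂μ := by
    rw [integral_pos_iff_support_of_nonneg (fun ω => (exp_pos _).le) hint2]
    have hsupp : Function.support
        (fun ω => exp ((n.descFactorial k : ℝ)⁻¹ * ∑ e : Fin k ↪ Fin n, Y e ω)) = Set.univ := by
      ext ω; simp [Function.support, (exp_pos _).ne']
    rw [hsupp, measure_univ]
    norm_num
  -- take logs
  have hRpos : 0 < ∏ σ : Equiv.Perm (Fin n), (∏ t : Fin (n - k + 1), G (w σ t)) ^ q :=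
    Finset.prod_pos fun σ _ => Real.rpow_pos_of_pos (hQpos σ) q
  have hlog : log (∫ ω, exp ((n.descFactorial k : ℝ)⁻¹ * ∑ e : Fin k ↪ Fin n, Y e ω) ∂μ)
      ≤ q * ∑ σ : Equiv.Perm (Fin n), ∑ t : Fin (n - k + 1), log (G (w σ t)) := by
    refine le_trans (Real.log_le_log hIpos hIle) ?_
    rw [Real.log_prod (fun σ _ => (Real.rpow_pos_of_pos (hQpos σ) q).ne')]
    rw [Finset.mul_sum]
    refine le_of_eq (Finset.sum_congr rfl fun σ _ => ?_)
    rw [Real.log_rpow (hQpos σ), Real.log_prod (fun t _ => (hGpos _).ne')]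
  -- final counting and arithmetic
  have hfinal : q * ∑ σ : Equiv.Perm (Fin n), ∑ t : Fin (n - k + 1), log (G (w σ t))
      = (n.descFactorial (k - 1) : ℝ)⁻¹ * ∑ e : Fin k ↪ Fin n, log (G e) := by
    rw [K1 (fun e => log (G e)), ← mul_assoc]
    congr 1
    have hk1n : k - 1 ≤ n := le_trans (Nat.sub_le k 1) hkn
    have hnk1 : n - (k - 1) = (n - k) + 1 := by omega
    have hfac2 : ((n - k + 1) * (n - k).factorial : ℕ) = (n - (k - 1)).factorial := by
      rw [hnk1, Nat.factorial_succ]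
    have hfac3 : ((n - (k - 1)).factorial : ℝ) * (n.descFactorial (k - 1) : ℝ)
        = (n.factorial : ℝ) := by
      exact_mod_cast Nat.factorial_mul_descFactorial hk1n
    have hM0 : n.descFactorial (k - 1) ≠ 0 := fun h =>
      absurd (Nat.descFactorial_eq_zero_iff_lt.mp h) (not_lt.mpr hk1n)
    have hMpos : (0:ℝ) < (n.descFactorial (k - 1) : ℝ) := by
      exact_mod_cast Nat.pos_of_ne_zero hM0
    rw [hfac2, hq]
    field_simp
    nlinarith [hfac3, hMpos, hnfacpos]
  exact le_of_le_of_eq hlog hfinal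
end

section
/- Let $X_1,\ldots,X_k$ be i.i.d. with law $\alpha$ and let $W : S^k \to \mathbb{R}$ be symmetric measurable with $\mathbb{E}|W(X_1,\ldots,X_k)| < \infty$. Then for every $n \ge k \ge 2$ and $\lambda > 0$, the log-moment generating function of the $U$-statistic satisfies $\frac{1}{n} \log \mathbb{E}[\exp(\lambda n U_n(W))] \le \frac{1}{k} \log \mathbb{E}[\exp(k C_k \lambda |W(X_1,\ldots,X_k)|)]$, where $C_2 = 8$ and $C_k = 2^k \prod_{j=2}^k (j^j - 1)$ for $k > 2$. -/
open MeasureTheory ProbabilityTheory Real Filter Topology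

/-- The `U`-statistic of order `k` for the kernel `Φ` and sample `x 0, …, x (n-1)`. -/
noncomputable def UStat {S : Type*} (k n : ℕ) (Φ : (Fin k → S) → ℝ) (x : ℕ → S) : ℝ :=
  ((n.descFactorial k : ℝ))⁻¹ * ∑ e : Fin k ↪ Fin n, Φ (fun j => x (e j))

/-- The de la Peña decoupling constants: `C₂ = 8` and `C_k = 2^k ∏_{j=2}^k (j^j - 1)` for
`k > 2`. -/
noncomputable def Cdec (k : ℕ) : ℝ :=
  if k = 2 then 8 else 2 ^ k * ∏ j ∈ Finset.Icc 2 k, ((j : ℝ) ^ j - 1)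



lemma exists_perm_comp {k n : ℕ} (b e : Fin k ↪ Fin n) :
    ∃ σ : Equiv.Perm (Fin n), ∀ j, σ (b j) = e j := by
  classical
  have hcard : Fintype.card ((Set.range ⇑b)ᶜ : Set (Fin n)) =
      Fintype.card ((Set.range ⇑e)ᶜ : Set (Fin n)) := by
    rw [Fintype.card_compl_set, Fintype.card_compl_set,
      Set.card_range_of_injective b.injective, Set.card_range_of_injective e.injective]
  let c : ((Set.range ⇑b)ᶜ : Set (Fin n)) ≃ ((Set.range ⇑e)ᶜ : Set (Fin n)) :=
    Fintype.equivOfCardEq hcard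
  let σ : Equiv.Perm (Fin n) :=
    (Equiv.Set.sumCompl (Set.range ⇑b)).symm.trans
      (((b.toEquivRange.symm.trans e.toEquivRange).sumCongr c).trans
        (Equiv.Set.sumCompl (Set.range ⇑e)))
  refine ⟨σ, fun j => ?_⟩
  have h1 : (Equiv.Set.sumCompl (Set.range ⇑b)).symm (b j) = Sum.inl ⟨b j, ⟨j, rfl⟩⟩ :=
    Equiv.Set.sumCompl_symm_apply_of_mem _
  simp only [σ, Equiv.trans_apply, h1, Equiv.sumCongr_apply, Sum.map_inl,
    Equiv.Set.sumCompl_apply_inl]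
  have : b.toEquivRange.symm ⟨b j, ⟨j, rfl⟩⟩ = j := b.toEquivRange_symm_apply_self j
  rw [this]
  rfl

lemma perm_sum {k n : ℕ} (b : Fin k ↪ Fin n) :
    ∃ c : ℕ, 0 < c ∧ c * n.descFactorial k = n.factorial ∧
      ∀ g : (Fin k ↪ Fin n) → ℝ,
        ∑ σ : Equiv.Perm (Fin n), g (b.trans σ.toEmbedding) = c * ∑ e : Fin k ↪ Fin n, g e := by
  classical
  set Φ : Equiv.Perm (Fin n) → (Fin k ↪ Fin n) := fun σ => b.trans σ.toEmbedding with hΦ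
  have hsurj : Function.Surjective Φ := by
    intro e
    obtain ⟨σ, hσ⟩ := exists_perm_comp b e
    exact ⟨σ, DFunLike.ext _ _ hσ⟩
  have himg : (Finset.univ.image Φ) = Finset.univ :=
    Finset.image_univ_of_surjective hsurj
  set c : ℕ := (Finset.univ.filter fun σ => Φ σ = b).card with hc
  have hfib : ∀ e : Fin k ↪ Fin n, (Finset.univ.filter fun σ => Φ σ = e).card = c := by
    intro e
    obtain ⟨σe, hσe⟩ := exists_perm_comp b e
    refine Finset.card_bij' (fun σ _ => σ.trans σe.symm) (fun τ _ => τ.trans σe) ?_ ?_ ?_ ?_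
    · intro σ hσ
      simp only [Finset.mem_filter, Finset.mem_univ, true_and] at hσ ⊢
      ext j
      have h2 : σ (b j) = e j := by
        have := congrArg (fun (f : Fin k ↪ Fin n) => f j) hσ
        simpa [Φ] using this
      simp only [Φ, Function.Embedding.trans_apply, Equiv.coe_toEmbedding, Equiv.trans_apply]
      rw [h2, ← hσe j, Equiv.symm_apply_apply]
    · intro τ hτ
      simp only [Finset.mem_filter, Finset.mem_univ, true_and] at hτ ⊢
      ext j
      have h2 : τ (b j) = b j := by
        have := congrArg (fun (f : Fin k ↪ Fin n) => f j) hτ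
        simpa [Φ] using this
      simp only [Φ, Function.Embedding.trans_apply, Equiv.coe_toEmbedding, Equiv.trans_apply]
      rw [h2, hσe j]
    · intro σ _; ext x; simp
    · intro τ _; ext x; simp
  have hcount : c * n.descFactorial k = n.factorial := by
    have h := Finset.card_eq_sum_card_image Φ Finset.univ
    rw [himg] at h
    simp only [hfib, Finset.sum_const, Finset.card_univ, smul_eq_mul] at h
    rw [Fintype.card_perm, Fintype.card_fin, Fintype.card_embedding_eq, Fintype.card_fin,
      Fintype.card_fin] at h
    rw [mul_comm]
    exact h.symm
  have hcpos : 0 < c := by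
    have : 0 < n.factorial := Nat.factorial_pos n
    rcases Nat.eq_zero_or_pos c with h | h
    · rw [h, zero_mul] at hcount; omega
    · exact h
  refine ⟨c, hcpos, hcount, fun g => ?_⟩
  rw [show (∑ σ : Equiv.Perm (Fin n), g (Φ σ)) = _ from Finset.sum_comp g Φ, himg]
  simp only [hfib, nsmul_eq_mul]
  rw [← Finset.mul_sum]

lemma map_tuple_eq_pi {Ω S : Type*} [MeasurableSpace Ω] [MeasurableSpace S]
    (μ : Measure Ω) [IsProbabilityMeasure μ] (α : Measure S)
    (X : ℕ → Ω → S) (hmeas : ∀ i, Measurable (X i))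
    (hindep : iIndepFun X μ)
    (hlaw : ∀ i, Measure.map (X i) μ = α)
    {ι : Type*} [Fintype ι] (c : ι → ℕ) (hc : Function.Injective c) :
    μ.map (fun ω (j : ι) => X (c j) ω) = Measure.pi (fun _ => α) := by
  classical
  haveI : IsProbabilityMeasure α := by
    rw [← hlaw 0]; exact Measure.isProbabilityMeasure_map (hmeas 0).aemeasurable
  have hF : Measurable (fun ω (j : ι) => X (c j) ω) :=
    measurable_pi_lambda _ fun j => hmeas (c j)
  refine (Measure.pi_eq (μ := fun _ : ι => α) fun s hs => ?_).symm
  rw [Measure.map_apply hF (MeasurableSet.univ_pi hs)]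
  have hpre : (fun ω (j : ι) => X (c j) ω) ⁻¹' Set.pi Set.univ s
      = ⋂ j : ι, X (c j) ⁻¹' s j := by
    ext ω; simp [Set.mem_univ_pi]
  set s' : ℕ → Set S := fun a => if h : ∃ j, c j = a then s h.choose else Set.univ with hs'def
  have hs' : ∀ a, MeasurableSet (s' a) := by
    intro a; simp only [s']; split_ifs with h
    · exact hs _
    · exact MeasurableSet.univ
  have key : ∀ j, s' (c j) = s j := by
    intro j
    have h : ∃ j', c j' = c j := ⟨j, rfl⟩
    simp only [s', dif_pos h]
    exact congrArg s (hc h.choose_spec)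
  have hsets : (⋂ a ∈ Finset.image c Finset.univ, X a ⁻¹' s' a)
      = ⋂ j : ι, X (c j) ⁻¹' s j := by
    ext ω
    simp only [Set.mem_iInter, Finset.mem_image, Finset.mem_univ, true_and, forall_exists_index]
    constructor
    · intro h j
      have := h (c j) j rfl
      rwa [key j] at this
    · rintro h a j rfl
      rw [key j]; exact h j
  have hmul := hindep.measure_inter_preimage_eq_mul (Finset.image c Finset.univ)
    (fun a _ => hs' a)
  rw [hpre, ← hsets, hmul, Finset.prod_image (fun j _ j' _ h => hc h)]
  refine Finset.prod_congr rfl fun j _ => ?_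
  rw [key j, ← hlaw (c j), Measure.map_apply (hmeas (c j)) (hs j)]

lemma lintegral_tuple {Ω S : Type*} [MeasurableSpace Ω] [MeasurableSpace S]
    (μ : Measure Ω) [IsProbabilityMeasure μ] (α : Measure S)
    (X : ℕ → Ω → S) (hmeas : ∀ i, Measurable (X i))
    (hindep : iIndepFun X μ)
    (hlaw : ∀ i, Measure.map (X i) μ = α)
    {ι : Type*} [Fintype ι] (c : ι → ℕ) (hc : Function.Injective c)
    (f : (ι → S) → ENNReal) (hf : Measurable f) :
    ∫⁻ ω, f (fun j => X (c j) ω) ∂μ = ∫⁻ y, f y ∂(Measure.pi (fun _ : ι => α)) := by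
  rw [← map_tuple_eq_pi μ α X hmeas hindep hlaw c hc,
    lintegral_map hf (measurable_pi_lambda _ fun j => hmeas (c j))]

lemma lintegral_block_prod {Ω S : Type*} [MeasurableSpace Ω] [MeasurableSpace S]
    (μ : Measure Ω) [IsProbabilityMeasure μ] {k : ℕ}
    (X : ℕ → Ω → S) (hmeas : ∀ i, Measurable (X i))
    (hindep : iIndepFun X μ)
    (m : ℕ) (g : ℕ → Fin k → ℕ)
    (hg : ∀ i i' j j', i < m → i' < m → g i j = g i' j' → i = i')
    (f : (Fin k → S) → ENNReal) (hf : Measurable f) :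
    ∫⁻ ω, ∏ i ∈ Finset.range m, f (fun j => X (g i j) ω) ∂μ
      = ∏ i ∈ Finset.range m, ∫⁻ ω, f (fun j => X (g i j) ω) ∂μ := by
  classical
  induction m with
  | zero => simp
  | succ m ih =>
    have hg' : ∀ i i' j j', i < m → i' < m → g i j = g i' j' → i = i' :=
      fun i i' j j' hi hi' h => hg i i' j j' (hi.trans (Nat.lt_succ_self m))
        (hi'.trans (Nat.lt_succ_self m)) h
    rcases Nat.eq_zero_or_pos m with rfl | hm
    · simp
    have hmeasP : Measurable (fun ω => ∏ i ∈ Finset.range m, f (fun j => X (g i j) ω)) :=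
      Finset.measurable_prod _ fun i _ =>
        hf.comp (measurable_pi_lambda _ fun j => hmeas (g i j))
    have hmeasQ : Measurable (fun ω => f (fun j => X (g m j) ω)) :=
      hf.comp (measurable_pi_lambda _ fun j => hmeas (g m j))
    set T₁ : Finset ℕ := (Finset.range m).biUnion (fun i => Finset.image (g i) Finset.univ)
      with hT₁
    set T₂ : Finset ℕ := Finset.image (g m) Finset.univ with hT₂
    have hdisj : Disjoint T₁ T₂ := by
      rw [Finset.disjoint_left]
      rintro a ha₁ ha₂
      rw [hT₁, Finset.mem_biUnion] at ha₁
      obtain ⟨i, hi, ha₁⟩ := ha₁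
      rw [Finset.mem_image] at ha₁
      obtain ⟨j, _, rfl⟩ := ha₁
      rw [hT₂, Finset.mem_image] at ha₂
      obtain ⟨j', _, hj'⟩ := ha₂
      rw [Finset.mem_range] at hi
      have := hg m i j' j (Nat.lt_succ_self m) (hi.trans (Nat.lt_succ_self m)) hj'
      omega
    have mem0 : ∀ j : Fin k, g 0 j ∈ T₁ := by
      intro j
      rw [hT₁, Finset.mem_biUnion]
      exact ⟨0, Finset.mem_range.2 hm, Finset.mem_image_of_mem _ (Finset.mem_univ _)⟩
    set φ : ((a : T₁) → S) → ENNReal := fun v =>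
      ∏ i ∈ Finset.range m, f (fun j =>
        v (if h : g i j ∈ T₁ then ⟨g i j, h⟩ else ⟨g 0 j, mem0 j⟩)) with hφdef
    set ψ : ((a : T₂) → S) → ENNReal := fun v =>
      f (fun j => v ⟨g m j, Finset.mem_image_of_mem _ (Finset.mem_univ _)⟩) with hψdef
    have hφ : Measurable φ :=
      Finset.measurable_prod _ fun i _ => hf.comp (measurable_pi_lambda _ fun j => by
        split_ifs <;> exact measurable_pi_apply _)
    have hψ : Measurable ψ :=
      hf.comp (measurable_pi_lambda _ fun j => measurable_pi_apply _)
    have hIndep : IndepFun (fun ω => ∏ i ∈ Finset.range m, f (fun j => X (g i j) ω))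
        (fun ω => f (fun j => X (g m j) ω)) μ := by
      have h := (hindep.indepFun_finset T₁ T₂ hdisj hmeas).comp hφ hψ
      have e₁ : (φ ∘ fun a (i : T₁) => X i a)
          = fun ω => ∏ i ∈ Finset.range m, f (fun j => X (g i j) ω) := by
        funext ω
        refine Finset.prod_congr rfl fun i hi => congrArg f (funext fun j => ?_)
        have hmem : g i j ∈ T₁ := by
          rw [hT₁, Finset.mem_biUnion]
          exact ⟨i, hi, Finset.mem_image_of_mem _ (Finset.mem_univ _)⟩
        simp only [Function.comp_apply, dif_pos hmem]
      have e₂ : (ψ ∘ fun a (i : T₂) => X i a)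
          = fun ω => f (fun j => X (g m j) ω) := rfl
      rwa [e₁, e₂] at h
    rw [Finset.prod_range_succ]
    have := lintegral_mul_eq_lintegral_mul_lintegral_of_indepFun hmeasP hmeasQ hIndep
    calc ∫⁻ ω, ∏ i ∈ Finset.range (m + 1), f (fun j => X (g i j) ω) ∂μ
        = ∫⁻ ω, (∏ i ∈ Finset.range m, f (fun j => X (g i j) ω))
            * f (fun j => X (g m j) ω) ∂μ := by
          simp_rw [Finset.prod_range_succ]
      _ = (∫⁻ ω, ∏ i ∈ Finset.range m, f (fun j => X (g i j) ω) ∂μ)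
            * ∫⁻ ω, f (fun j => X (g m j) ω) ∂μ := this
      _ = _ := by rw [ih hg']

lemma ereal_cases (x : EReal) : x = ⊥ ∨ (∃ a : ℝ, x = (a : EReal)) ∨ x = ⊤ := by
  induction x using EReal.rec with
  | bot => exact Or.inl rfl
  | coe a => exact Or.inr (Or.inl ⟨a, rfl⟩)
  | top => exact Or.inr (Or.inr rfl)

/-- Key lemma: if `X₁, X₂, …` are i.i.d. with law `α` and `W` is a symmetric measurable
kernel with `E|W(X₁,…,X_k)| < ∞`, then for all `n ≥ k ≥ 2` and `λ > 0`, the log-moment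
generating function of the `U`-statistic satisfies
`(1/n) log E[exp(λ n U_n(W))] ≤ (1/k) log E[exp(k C_k λ |W(X₁,…,X_k)|)]`. -/
theorem ustat_logmgf_bound {Ω S : Type*} [MeasurableSpace Ω] [MeasurableSpace S]
    (μ : Measure Ω) [IsProbabilityMeasure μ] (α : Measure S)
    (X : ℕ → Ω → S) (hmeas : ∀ i, Measurable (X i))
    (hindep : iIndepFun X μ)
    (hlaw : ∀ i, Measure.map (X i) μ = α)
    (k : ℕ) (hk : 2 ≤ k) (W : (Fin k → S) → ℝ) (hWmeas : Measurable W)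
    (hsymm : ∀ (σ : Equiv.Perm (Fin k)) (y : Fin k → S), W (y ∘ σ) = W y)
    (hint : Integrable (fun ω => W (fun j => X j ω)) μ)
    (n : ℕ) (hn : k ≤ n) (lam : ℝ) (hlam : 0 < lam) :
    (((n : ℝ)⁻¹ : ℝ) : EReal) * ENNReal.log
        (∫⁻ ω, ENNReal.ofReal (exp (lam * n * UStat k n W (fun i => X i ω))) ∂μ)
      ≤ (((k : ℝ)⁻¹ : ℝ) : EReal) * ENNReal.log
        (∫⁻ ω, ENNReal.ofReal (exp (k * Cdec k * lam * |W (fun j => X j ω)|)) ∂μ) := by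
  classical
  have hk0 : 0 < k := by omega
  have hn0 : 0 < n := lt_of_lt_of_le (by omega) hn
  set m := n / k with hmdef
  have hm1 : 1 ≤ m := (Nat.one_le_div_iff hk0).mpr hn
  have hmk : m * k ≤ n := Nat.div_mul_le_self n k
  have hn2 : n ≤ 2 * (m * k) := by
    have h1 : k * m + n % k = n := Nat.div_add_mod n k
    have h2 : n % k < k := Nat.mod_lt _ hk0
    have h3 : k * 1 ≤ k * m := Nat.mul_le_mul_left k hm1
    have h4 : k * m = m * k := Nat.mul_comm k m
    generalize m * k = q at h1 h3 h4 ⊢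
    omega
  -- block embeddings
  have hblkb : ∀ (i : ℕ) (j : Fin k), (i % m) * k + (j : ℕ) < n := by
    intro i j
    have h1 : i % m < m := Nat.mod_lt _ (by omega)
    have h2 : (i % m) * k + k ≤ m * k := by
      have h3 : (i % m + 1) * k ≤ m * k := Nat.mul_le_mul_right k h1
      rw [add_mul, one_mul] at h3
      exact h3
    have h3 := j.2
    omega
  set blk : ℕ → (Fin k ↪ Fin n) := fun i =>
    ⟨fun j => ⟨(i % m) * k + j, hblkb i j⟩, by
      intro j j' h
      simp only [Fin.mk.injEq] at h
      exact Fin.ext (by omega)⟩ with hblkdef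
  -- combinatorial constant
  have hD : 0 < n.descFactorial k := by
    rcases Nat.eq_zero_or_pos (n.descFactorial k) with h | h
    · rw [Nat.descFactorial_eq_zero_iff_lt] at h; omega
    · exact h
  obtain ⟨c, hc0, hcD, _⟩ := perm_sum (blk 0)
  have hsum : ∀ (i : ℕ) (x : ℕ → S),
      (∑ σ : Equiv.Perm (Fin n), W (fun j => x ((σ (blk i j) : Fin n) : ℕ)))
        = (c : ℝ) * ∑ e : Fin k ↪ Fin n, W (fun j => x ((e j : Fin n) : ℕ)) := by
    intro i x
    obtain ⟨c', hc'0, hc'D, hc'⟩ := perm_sum (blk i)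
    have hcc : c' = c := Nat.eq_of_mul_eq_mul_right hD (by rw [hcD, hc'D])
    rw [← hcc]
    exact hc' (fun e => W (fun j => x ((e j : Fin n) : ℕ)))
  set t := lam * n / m with htdef
  have hmne : (m : ℝ) ≠ 0 := Nat.cast_ne_zero.mpr (by omega)
  have hfacne : ((n.factorial : ℝ)) ≠ 0 := Nat.cast_ne_zero.mpr (Nat.factorial_ne_zero n)
  have hDne : ((n.descFactorial k : ℝ)) ≠ 0 := Nat.cast_ne_zero.mpr (by omega)
  have hcne : ((c : ℝ)) ≠ 0 := Nat.cast_ne_zero.mpr (by omega)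
  -- pointwise Jensen bound
  have hpoint : ∀ x : ℕ → S,
      exp (lam * n * UStat k n W x) ≤ ∑ σ : Equiv.Perm (Fin n), (n.factorial : ℝ)⁻¹ *
        exp (t * ∑ i ∈ Finset.range m, W (fun j => x ((σ (blk i j) : Fin n) : ℕ))) := by
    intro x
    have hw1 : ∑ _σ : Equiv.Perm (Fin n), (n.factorial : ℝ)⁻¹ = 1 := by
      rw [Finset.sum_const, Finset.card_univ, Fintype.card_perm, Fintype.card_fin, nsmul_eq_mul]
      exact mul_inv_cancel₀ hfacne
    have hiden : (∑ σ : Equiv.Perm (Fin n), (n.factorial : ℝ)⁻¹ •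
        (t * ∑ i ∈ Finset.range m, W (fun j => x ((σ (blk i j) : Fin n) : ℕ))))
        = lam * n * UStat k n W x := by
      simp only [smul_eq_mul]
      rw [← Finset.mul_sum, ← Finset.mul_sum, Finset.sum_comm]
      have hinner : (∑ i ∈ Finset.range m, ∑ σ : Equiv.Perm (Fin n),
          W (fun j => x ((σ (blk i j) : Fin n) : ℕ)))
          = (m : ℝ) * ((c : ℝ) * ∑ e : Fin k ↪ Fin n, W (fun j => x ((e j : Fin n) : ℕ))) := by
        rw [Finset.sum_congr rfl fun i _ => hsum i x, Finset.sum_const, Finset.card_range,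
          nsmul_eq_mul]
      have hcD' : (c : ℝ) * (n.descFactorial k : ℝ) = (n.factorial : ℝ) := by
        exact_mod_cast congrArg (Nat.cast : ℕ → ℝ) hcD
      have hfrac : (c : ℝ) * ((n.factorial : ℝ))⁻¹ = ((n.descFactorial k : ℝ))⁻¹ := by
        rw [← hcD', mul_inv, ← mul_assoc, mul_inv_cancel₀ hcne, one_mul]
      have key : ∀ Ssum : ℝ, (n.factorial : ℝ)⁻¹ * (t * ((m : ℝ) * ((c : ℝ) * Ssum)))
          = lam * (n : ℝ) * (((n.descFactorial k : ℝ))⁻¹ * Ssum) := by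
        intro Ssum
        have htm : t * (m : ℝ) = lam * (n : ℝ) := by
          rw [htdef]; exact div_mul_cancel₀ _ hmne
        calc (n.factorial : ℝ)⁻¹ * (t * ((m : ℝ) * ((c : ℝ) * Ssum)))
            = (t * (m : ℝ)) * ((c : ℝ) * ((n.factorial : ℝ))⁻¹) * Ssum := by ring
          _ = (lam * (n : ℝ)) * ((n.descFactorial k : ℝ))⁻¹ * Ssum := by rw [htm, hfrac]
          _ = lam * (n : ℝ) * (((n.descFactorial k : ℝ))⁻¹ * Ssum) := by ring
      rw [hinner]
      simp only [UStat]
      exact key _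
    calc exp (lam * n * UStat k n W x)
        = exp (∑ σ : Equiv.Perm (Fin n), (n.factorial : ℝ)⁻¹ •
            (t * ∑ i ∈ Finset.range m, W (fun j => x ((σ (blk i j) : Fin n) : ℕ)))) := by
          rw [hiden]
      _ ≤ ∑ σ : Equiv.Perm (Fin n), (n.factorial : ℝ)⁻¹ •
            exp (t * ∑ i ∈ Finset.range m, W (fun j => x ((σ (blk i j) : Fin n) : ℕ))) :=
          convexOn_exp.map_sum_le (fun _ _ => by positivity) hw1 (fun _ _ => Set.mem_univ _)
      _ = _ := by simp [smul_eq_mul]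
  -- measurability helpers
  have hWm : ∀ (g : Fin k → ℕ), Measurable (fun ω => W (fun j => X (g j) ω)) :=
    fun g => hWmeas.comp (measurable_pi_lambda _ fun j => hmeas (g j))
  have hfm : Measurable (fun y : Fin k → S => ENNReal.ofReal (exp (t * W y))) :=
    ENNReal.measurable_ofReal.comp (Real.measurable_exp.comp (hWmeas.const_mul t))
  set R := ∫⁻ ω, ENNReal.ofReal (exp (k * Cdec k * lam * |W (fun j => X j ω)|)) ∂μ with hRdef
  set F := ∫⁻ ω, ENNReal.ofReal (exp (t * W (fun j => X j ω))) ∂μ with hFdef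
  -- per-permutation factorization
  have hper : ∀ σ : Equiv.Perm (Fin n),
      (∫⁻ ω, ENNReal.ofReal (exp (t * ∑ i ∈ Finset.range m,
        W (fun j => X ((σ (blk i j) : Fin n) : ℕ) ω))) ∂μ) = F ^ m := by
    intro σ
    set g : ℕ → Fin k → ℕ := fun i j => ((σ (blk i j) : Fin n) : ℕ) with hgdef
    have hginj : ∀ i i' (j j' : Fin k), i < m → i' < m → g i j = g i' j' → i = i' := by
      intro i i' j j' hi hi' h
      have h1 : blk i j = blk i' j' := σ.injective (Fin.val_injective h)
      have h2 : (i % m) * k + (j : ℕ) = (i' % m) * k + (j' : ℕ) := congrArg Fin.val h1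
      rw [Nat.mod_eq_of_lt hi, Nat.mod_eq_of_lt hi'] at h2
      have hj := j.2
      have hj' := j'.2
      have e1 : (i * k + (j : ℕ)) / k = i := by
        rw [mul_comm, Nat.mul_add_div hk0, Nat.div_eq_of_lt hj, add_zero]
      have e2 : (i' * k + (j' : ℕ)) / k = i' := by
        rw [mul_comm, Nat.mul_add_div hk0, Nat.div_eq_of_lt hj', add_zero]
      rw [← e1, ← e2, h2]
    have hgi : ∀ i, Function.Injective (g i) :=
      fun i j j' h => (blk i).injective (σ.injective (Fin.val_injective h))
    have hpt : ∀ ω, ENNReal.ofReal (exp (t * ∑ i ∈ Finset.range m, W (fun j => X (g i j) ω)))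
        = ∏ i ∈ Finset.range m, ENNReal.ofReal (exp (t * W (fun j => X (g i j) ω))) := by
      intro ω
      rw [Finset.mul_sum, Real.exp_sum, ENNReal.ofReal_prod_of_nonneg]
      exact fun i _ => (exp_pos _).le
    have hFi : ∀ i, (∫⁻ ω, ENNReal.ofReal (exp (t * W (fun j => X (g i j) ω))) ∂μ) = F := by
      intro i
      rw [lintegral_tuple μ α X hmeas hindep hlaw (g i) (hgi i) _ hfm, hFdef,
        ← lintegral_tuple μ α X hmeas hindep hlaw (fun j : Fin k => (j : ℕ))
          Fin.val_injective _ hfm]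
    calc (∫⁻ ω, ENNReal.ofReal (exp (t * ∑ i ∈ Finset.range m,
          W (fun j => X (g i j) ω))) ∂μ)
        = ∫⁻ ω, ∏ i ∈ Finset.range m,
            ENNReal.ofReal (exp (t * W (fun j => X (g i j) ω))) ∂μ := lintegral_congr hpt
      _ = ∏ i ∈ Finset.range m,
            ∫⁻ ω, ENNReal.ofReal (exp (t * W (fun j => X (g i j) ω))) ∂μ :=
          lintegral_block_prod μ X hmeas hindep m g hginj _ hfm
      _ = F ^ m := by
          rw [Finset.prod_congr rfl fun i _ => hFi i, Finset.prod_const, Finset.card_range]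
  -- main lintegral bound
  have hIbound : (∫⁻ ω, ENNReal.ofReal (exp (lam * n * UStat k n W (fun i => X i ω))) ∂μ)
      ≤ F ^ m := by
    have hmeasσ : ∀ σ : Equiv.Perm (Fin n), Measurable (fun ω =>
        ENNReal.ofReal (exp (t * ∑ i ∈ Finset.range m,
          W (fun j => X ((σ (blk i j) : Fin n) : ℕ) ω)))) :=
      fun σ => ENNReal.measurable_ofReal.comp (Real.measurable_exp.comp
        ((Finset.measurable_sum _ fun i _ => hWm _).const_mul t))
    have hmeasσ' : ∀ σ : Equiv.Perm (Fin n), Measurable (fun ω =>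
        ENNReal.ofReal ((n.factorial : ℝ)⁻¹ * exp (t * ∑ i ∈ Finset.range m,
          W (fun j => X ((σ (blk i j) : Fin n) : ℕ) ω)))) :=
      fun σ => ENNReal.measurable_ofReal.comp ((Real.measurable_exp.comp
        ((Finset.measurable_sum _ fun i _ => hWm _).const_mul t)).const_mul _)
    calc (∫⁻ ω, ENNReal.ofReal (exp (lam * n * UStat k n W (fun i => X i ω))) ∂μ)
        ≤ ∫⁻ ω, ENNReal.ofReal (∑ σ : Equiv.Perm (Fin n), (n.factorial : ℝ)⁻¹ *
            exp (t * ∑ i ∈ Finset.range m,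
              W (fun j => X ((σ (blk i j) : Fin n) : ℕ) ω))) ∂μ :=
          lintegral_mono fun ω => ENNReal.ofReal_le_ofReal (hpoint _)
      _ = ∑ σ : Equiv.Perm (Fin n), ∫⁻ ω, ENNReal.ofReal ((n.factorial : ℝ)⁻¹ *
            exp (t * ∑ i ∈ Finset.range m,
              W (fun j => X ((σ (blk i j) : Fin n) : ℕ) ω))) ∂μ := by
          rw [lintegral_congr (fun ω =>
            ENNReal.ofReal_sum_of_nonneg (fun σ _ => by positivity)),
            lintegral_finset_sum _ (fun σ _ => hmeasσ' σ)]
      _ = ∑ _σ : Equiv.Perm (Fin n), ENNReal.ofReal ((n.factorial : ℝ)⁻¹) * F ^ m := by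
          refine Finset.sum_congr rfl fun σ _ => ?_
          rw [← hper σ, ← lintegral_const_mul _ (hmeasσ σ)]
          exact lintegral_congr fun ω => ENNReal.ofReal_mul (by positivity)
      _ = F ^ m := by
          rw [Finset.sum_const, Finset.card_univ, Fintype.card_perm, Fintype.card_fin,
            nsmul_eq_mul, ENNReal.ofReal_inv_of_pos (by positivity), ENNReal.ofReal_natCast,
            ← mul_assoc, ENNReal.mul_inv_cancel (by exact_mod_cast Nat.factorial_ne_zero n)
              (by simp), one_mul]
  -- compare F with R
  have ht0 : 0 ≤ t := by positivity
  have hC2 : (2 : ℝ) ≤ Cdec k := by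
    rw [Cdec]
    split_ifs with h
    · norm_num
    · have hprod : (1 : ℝ) ≤ ∏ j ∈ Finset.Icc 2 k, ((j : ℝ) ^ j - 1) := by
        have hp := Finset.prod_le_prod (s := Finset.Icc 2 k) (f := fun _ => (1 : ℝ))
          (g := fun j : ℕ => (j : ℝ) ^ j - 1) (fun i _ => zero_le_one) (fun j hj => ?_)
        · simpa using hp
        rw [Finset.mem_Icc] at hj
        have h2j : (2 : ℝ) ≤ (j : ℝ) := by exact_mod_cast hj.1
        have h4 : (4 : ℝ) ≤ (j : ℝ) ^ j := by
          calc (4 : ℝ) = 2 ^ 2 := by norm_num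
            _ ≤ (j : ℝ) ^ 2 := by nlinarith
            _ ≤ (j : ℝ) ^ j := pow_le_pow_right₀ (by linarith) hj.1
        show (1 : ℝ) ≤ (j : ℝ) ^ j - 1
        linarith
      have h2k : (2 : ℝ) ≤ 2 ^ k := by
        calc (2 : ℝ) = 2 ^ 1 := (pow_one 2).symm
          _ ≤ 2 ^ k := pow_le_pow_right₀ one_le_two (by omega)
      nlinarith
  have htle : t ≤ (k : ℝ) * Cdec k * lam := by
    have hcast : (n : ℝ) ≤ 2 * ((m : ℝ) * k) := by exact_mod_cast hn2
    have h1 : t ≤ 2 * k * lam := by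
      rw [htdef, div_le_iff₀ (by positivity : (0 : ℝ) < (m : ℝ))]
      nlinarith [mul_le_mul_of_nonneg_left hcast hlam.le]
    have h2 : 2 * (k : ℝ) * lam ≤ (k : ℝ) * Cdec k * lam := by
      nlinarith [hC2, hlam.le, (show (0 : ℝ) ≤ (k : ℝ) by positivity)]
    linarith
  have hFR : F ≤ R := by
    refine lintegral_mono fun ω => ENNReal.ofReal_le_ofReal (exp_le_exp.mpr ?_)
    calc t * W (fun j => X j ω) ≤ t * |W (fun j => X j ω)| :=
          mul_le_mul_of_nonneg_left (le_abs_self _) ht0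
      _ ≤ (k : ℝ) * Cdec k * lam * |W (fun j => X j ω)| :=
          mul_le_mul_of_nonneg_right htle (abs_nonneg _)
  have hIR : (∫⁻ ω, ENNReal.ofReal (exp (lam * n * UStat k n W (fun i => X i ω))) ∂μ)
      ≤ R ^ m := le_trans hIbound (pow_le_pow_left₀ (zero_le') hFR m)
  -- R ≥ 1
  have hR1 : 1 ≤ R := by
    have h1 : (∫⁻ _ω, (1 : ENNReal) ∂μ) ≤ R := by
      rw [hRdef]
      refine lintegral_mono fun ω => ?_
      rw [show (1 : ENNReal) = ENNReal.ofReal (exp 0) by simp]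
      exact ENNReal.ofReal_le_ofReal (exp_le_exp.mpr (by positivity))
    simpa using h1
  have hlogR0 : (0 : EReal) ≤ ENNReal.log R := by
    rw [← ENNReal.log_one]
    exact ENNReal.log_monotone hR1
  have hlogI : ENNReal.log (∫⁻ ω, ENNReal.ofReal
      (exp (lam * n * UStat k n W (fun i => X i ω))) ∂μ) ≤ (m : EReal) * ENNReal.log R := by
    calc ENNReal.log (∫⁻ ω, ENNReal.ofReal
          (exp (lam * n * UStat k n W (fun i => X i ω))) ∂μ)
        ≤ ENNReal.log (R ^ m) := ENNReal.log_monotone hIR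
      _ = (m : EReal) * ENNReal.log R := ENNReal.log_pow
  -- endgame in EReal
  have hkinvpos : (0 : ℝ) < (k : ℝ)⁻¹ := by positivity
  have hninvpos : (0 : ℝ) < (n : ℝ)⁻¹ := by positivity
  rcases ereal_cases (ENNReal.log R) with hT | ⟨l, hl⟩ | hT
  · rw [hT] at hlogR0
    exact absurd hlogR0 (by simp)
  · have hl0 : (0 : ℝ) ≤ l := by
      rw [hl] at hlogR0
      exact_mod_cast hlogR0
    rw [hl] at hlogI ⊢
    have hml : ((m : EReal) * (l : EReal)) = (((m : ℝ) * l : ℝ) : EReal) := by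
      rw [← EReal.coe_coe_eq_natCast, ← EReal.coe_mul]
    rw [hml] at hlogI
    rcases ereal_cases (ENNReal.log (∫⁻ ω, ENNReal.ofReal
          (exp (lam * n * UStat k n W (fun i => X i ω))) ∂μ)) with hB | ⟨a, ha⟩ | hTT
    · rw [hB, EReal.coe_mul_bot_of_pos hninvpos]
      exact bot_le
    · rw [ha] at hlogI ⊢
      have haml : a ≤ (m : ℝ) * l := by exact_mod_cast hlogI
      rw [← EReal.coe_mul, ← EReal.coe_mul, EReal.coe_le_coe_iff]
      have hnpos : (0 : ℝ) < (n : ℝ) := by positivity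
      have hkpos : (0 : ℝ) < (k : ℝ) := by positivity
      have hmkn : (m : ℝ) * k ≤ (n : ℝ) := by exact_mod_cast hmk
      rw [← div_eq_inv_mul, ← div_eq_inv_mul, div_le_div_iff₀ hnpos hkpos]
      nlinarith [mul_le_mul_of_nonneg_right haml hkpos.le,
        mul_le_mul_of_nonneg_right hmkn hl0]
    · rw [hTT, top_le_iff] at hlogI
      exact absurd hlogI (EReal.coe_ne_top _)
  · rw [hT, EReal.coe_mul_top_of_pos hkinvpos]
    exact le_top
end

section
/- Let $(X_i)$ be i.i.d. with law $\alpha$ and $W : S^k \to \mathbb{R}$ symmetric measurable satisfying $\mathbb{E}[\exp(\lambda |W(X_1,\ldots,X_k)|)] < \infty$ for all $\lambda > 0$. Then there exists a sequence of bounded continuous symmetric functions $(W_m)_{m\ge 1}$ on $S^k$ such that $\log \mathbb{E}[\exp(\lambda |W - W_m|(X_1,\ldots,X_k))] \to 0$ as $m \to \infty$ for every $\lambda > 0$. -/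
open MeasureTheory ProbabilityTheory Real Filter Topology
open scoped BoundedContinuousFunction

section ExpApproxHelpers

lemma my_clamp_abs_le {w M : ℝ} (hM : 0 ≤ M) : |max (min w M) (-M)| ≤ M := by
  rw [abs_le]
  refine ⟨le_max_right _ _, max_le (min_le_right _ _) (by linarith)⟩

lemma my_sub_clamp_abs_le {w M : ℝ} (hM : 0 ≤ M) : |w - max (min w M) (-M)| ≤ |w| := by
  rcases le_total M w with h1 | h1
  · rw [min_eq_right h1, max_eq_left (by linarith)]
    rw [abs_of_nonneg (by linarith), abs_of_nonneg (by linarith)]; linarith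
  · rw [min_eq_left h1]
    rcases le_total w (-M) with h2 | h2
    · rw [max_eq_right h2, abs_of_nonpos (by linarith), abs_of_nonpos (by linarith)]; linarith
    · rw [max_eq_left h2]; simp

lemma my_clamp_eq {w M : ℝ} (h : |w| ≤ M) : max (min w M) (-M) = w := by
  rw [abs_le] at h
  rw [min_eq_left h.2, max_eq_left h.1]

lemma my_clamp_dist {a b M : ℝ} (hb : |b| ≤ M) : |max (min a M) (-M) - b| ≤ |a - b| := by
  rw [abs_le] at hb
  rcases le_total a (-M) with h1 | h1
  · rw [min_eq_left (by linarith), max_eq_right (by linarith)]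
    rw [abs_of_nonpos (by linarith), abs_of_nonpos (by linarith)]; linarith
  · rcases le_total M a with h2 | h2
    · rw [min_eq_right h2, max_eq_left (by linarith)]
      rw [abs_of_nonneg (by linarith), abs_of_nonneg (by linarith)]; linarith
    · rw [min_eq_left h2, max_eq_left h1]

lemma my_abs_sub_le' (a b : ℝ) : |a - b| ≤ |a| + |b| := by
  rw [sub_eq_add_neg]; simpa using abs_add_le a (-b)

lemma my_exp_le_one_add {t T : ℝ} (ht : 0 ≤ t) (hT : t ≤ T) : exp t ≤ 1 + t * exp T := by
  have h1 : 1 - t ≤ exp (-t) := by nlinarith [add_one_le_exp (-t)]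
  have h2 : (1 - t) * exp t ≤ 1 := by
    calc (1 - t) * exp t ≤ exp (-t) * exp t :=
          mul_le_mul_of_nonneg_right h1 (exp_pos t).le
      _ = 1 := by rw [← exp_add]; simp
  nlinarith [exp_pos t, exp_le_exp.2 hT, mul_le_mul_of_nonneg_left (exp_le_exp.2 hT) ht]

lemma my_mp_perm {S : Type*} [MeasurableSpace S] (α : Measure S) [SigmaFinite α] (k : ℕ)
    (σ : Equiv.Perm (Fin k)) :
    MeasurePreserving (fun y : Fin k → S => y ∘ σ)
      (Measure.pi fun _ : Fin k => α) (Measure.pi fun _ : Fin k => α) := by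
  have h := measurePreserving_piCongrLeft (fun _ : Fin k => α) σ.symm
  convert h using 1
  ext y
  simp [MeasurableEquiv.piCongrLeft, Equiv.piCongrLeft]

lemma my_integral_comp_perm {S : Type*} [MeasurableSpace S] (α : Measure S) [SigmaFinite α]
    (k : ℕ) (σ : Equiv.Perm (Fin k)) (h : (Fin k → S) → ℝ) :
    ∫ y, h (y ∘ σ) ∂(Measure.pi fun _ : Fin k => α)
      = ∫ y, h y ∂(Measure.pi fun _ : Fin k => α) := by
  have hemb : MeasurableEmbedding (fun y : Fin k → S => y ∘ σ) := by
    have heq : (fun y : Fin k → S => y ∘ σ)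
        = ⇑(MeasurableEquiv.piCongrLeft (fun _ : Fin k => S) σ.symm) := by
      ext y
      simp [MeasurableEquiv.piCongrLeft, Equiv.piCongrLeft]
    rw [heq]
    exact (MeasurableEquiv.piCongrLeft (fun _ : Fin k => S) σ.symm).measurableEmbedding
  exact (my_mp_perm α k σ).integral_comp hemb h

lemma my_integrable_of_bounded {X : Type*} [MeasurableSpace X] {μ : Measure X}
    [IsFiniteMeasure μ] {f : X → ℝ} (hf : AEStronglyMeasurable f μ) {C : ℝ}
    (h : ∀ x, |f x| ≤ C) : Integrable f μ :=
  ⟨hf, HasFiniteIntegral.of_bounded (C := C) (ae_of_all _ (by simpa [Real.norm_eq_abs] using h))⟩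

end ExpApproxHelpers


/-- Exponential approximation by bounded continuous kernels: if `W : S^k → ℝ` is symmetric
measurable with `E[exp(λ|W(X₁,…,X_k)|)] < ∞` for all `λ > 0` (the `X_i` i.i.d. of law `α`
on a Polish space `S`), then there is a sequence `(W_m)` of bounded continuous symmetric
functions on `S^k` with `log E[exp(λ|W - W_m|(X₁,…,X_k))] → 0` as `m → ∞`, for every
`λ > 0`. -/
theorem exists_boundedContinuous_exp_approx {S : Type*} [MeasurableSpace S]
    [TopologicalSpace S] [PolishSpace S] [BorelSpace S]
    (α : Measure S) [IsProbabilityMeasure α]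
    (k : ℕ) (hk : 1 ≤ k) (W : (Fin k → S) → ℝ) (hWmeas : Measurable W)
    (hsymm : ∀ (σ : Equiv.Perm (Fin k)) (y : Fin k → S), W (y ∘ σ) = W y)
    (hexp : ∀ lam : ℝ, 0 < lam →
      Integrable (fun x => exp (lam * |W x|)) (Measure.pi fun _ : Fin k => α)) :
    ∃ Wm : ℕ → (Fin k → S) → ℝ,
      (∀ m, Continuous (Wm m)) ∧
      (∀ m, ∃ C : ℝ, ∀ y, |Wm m y| ≤ C) ∧
      (∀ m (σ : Equiv.Perm (Fin k)) (y : Fin k → S), Wm m (y ∘ σ) = Wm m y) ∧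
      (∀ lam : ℝ, 0 < lam →
        Tendsto (fun m =>
            log (∫ x, exp (lam * |W x - Wm m x|) ∂(Measure.pi fun _ : Fin k => α)))
          atTop (𝓝 0)) := by
  classical
  set μ : Measure (Fin k → S) := Measure.pi fun _ : Fin k => α with hμdef
  haveI : IsProbabilityMeasure μ := by infer_instance
  -- truncation
  set B : ℕ → (Fin k → S) → ℝ := fun m x => max (min (W x) (m : ℝ)) (-(m : ℝ)) with hBdef
  have hBmeas : ∀ m, Measurable (B m) := fun m =>
    (hWmeas.min measurable_const).max measurable_const
  have hBabs : ∀ m x, |B m x| ≤ (m : ℝ) := fun m x => my_clamp_abs_le (Nat.cast_nonneg m)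
  have hBsub : ∀ m x, |W x - B m x| ≤ |W x| := fun m x =>
    my_sub_clamp_abs_le (Nat.cast_nonneg m)
  have hBsymm : ∀ m (σ : Equiv.Perm (Fin k)) (y : Fin k → S), B m (y ∘ σ) = B m y := by
    intro m σ y; simp only [hBdef, hsymm σ y]
  have hBint : ∀ m, Integrable (B m) μ := fun m =>
    my_integrable_of_bounded ((hBmeas m).aestronglyMeasurable) (hBabs m)
  -- L¹ approximation by bounded continuous functions
  set ε : ℕ → ℝ := fun m => exp (-(4 * (m : ℝ) ^ 2 + m)) with hεdef
  have hεpos : ∀ m, 0 < ε m := fun m => exp_pos _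
  haveI : NormalSpace (Fin k → S) := by
    letI := TopologicalSpace.upgradeIsCompletelyMetrizable (Fin k → S)
    infer_instance
  have hg : ∀ m : ℕ, ∃ g : BoundedContinuousFunction (Fin k → S) ℝ,
      (∫ x, ‖B m x - g x‖ ∂μ) ≤ ε m ∧ Integrable g μ := fun m =>
    (hBint m).exists_boundedContinuous_integral_sub_le (hεpos m)
  choose g hgL1 hgint using hg
  -- clamp the approximants
  set c : ℕ → (Fin k → S) → ℝ := fun m x => max (min (g m x) (m : ℝ)) (-(m : ℝ)) with hcdef
  have hccont : ∀ m, Continuous (c m) := fun m =>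
    ((g m).continuous.min continuous_const).max continuous_const
  have hcabs : ∀ m x, |c m x| ≤ (m : ℝ) := fun m x => my_clamp_abs_le (Nat.cast_nonneg m)
  have hBcbound : ∀ m x, |B m x - c m x| ≤ 2 * m := fun m x =>
    le_trans (my_abs_sub_le' _ _) (by
      have := hBabs m x; have := hcabs m x; linarith)
  have hcL1 : ∀ m, (∫ x, |B m x - c m x| ∂μ) ≤ ε m := by
    intro m
    refine le_trans (integral_mono ?_ ?_ ?_) (hgL1 m)
    · exact my_integrable_of_bounded (((hBmeas m).sub (hccont m).measurable).abs
        |>.aestronglyMeasurable) (C := 2 * m)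
        (fun x => by rw [abs_abs]; exact hBcbound m x)
    · exact ((hBint m).sub (hgint m)).norm
    · intro x
      show |B m x - c m x| ≤ ‖B m x - g m x‖
      rw [Real.norm_eq_abs, abs_sub_comm (B m x), abs_sub_comm (B m x)]
      exact my_clamp_dist (hBabs m x)
  -- symmetrization
  set Wm : ℕ → (Fin k → S) → ℝ :=
    fun m y => (∑ σ : Equiv.Perm (Fin k), c m (y ∘ σ)) / (k.factorial : ℝ) with hWmdef
  have hfacpos : (0 : ℝ) < (k.factorial : ℝ) := by
    exact_mod_cast k.factorial_pos
  have hcard : (Fintype.card (Equiv.Perm (Fin k)) : ℝ) = (k.factorial : ℝ) := by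
    rw [Fintype.card_perm, Fintype.card_fin]
  have hWmcont : ∀ m, Continuous (Wm m) := by
    intro m
    apply Continuous.div_const
    exact continuous_finset_sum _ fun σ _ =>
      (hccont m).comp (continuous_pi fun i => continuous_apply (σ i))
  have hWm_abs : ∀ m y, |Wm m y| ≤ (m : ℝ) := by
    intro m y
    show |(∑ σ : Equiv.Perm (Fin k), c m (y ∘ σ)) / (k.factorial : ℝ)| ≤ (m : ℝ)
    rw [abs_div, abs_of_pos hfacpos, div_le_iff₀ hfacpos]
    calc |∑ σ : Equiv.Perm (Fin k), c m (y ∘ σ)|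
        ≤ ∑ σ : Equiv.Perm (Fin k), |c m (y ∘ σ)| := Finset.abs_sum_le_sum_abs _ _
      _ ≤ ∑ _σ : Equiv.Perm (Fin k), (m : ℝ) := Finset.sum_le_sum fun σ _ => hcabs m _
      _ = (Fintype.card (Equiv.Perm (Fin k)) : ℝ) * m := by
          rw [Finset.sum_const, Finset.card_univ, nsmul_eq_mul]
      _ = (m : ℝ) * (k.factorial : ℝ) := by rw [hcard]; ring
  have hWmsymm : ∀ m (τ : Equiv.Perm (Fin k)) (y : Fin k → S), Wm m (y ∘ τ) = Wm m y := by
    intro m τ y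
    rw [hWmdef]
    simp only
    congr 1
    refine Fintype.sum_equiv (Equiv.mulLeft τ) _ _ (fun σ => ?_)
    have h : (y ∘ ⇑τ) ∘ ⇑σ = y ∘ ⇑(Equiv.mulLeft τ σ) := by
      ext i
      simp [Equiv.Perm.mul_apply]
    rw [h]
  have hWmmeas : ∀ m, Measurable (Wm m) := fun m => (hWmcont m).measurable
  have hBWm : ∀ m x, |B m x - Wm m x| ≤ 2 * m := fun m x =>
    le_trans (my_abs_sub_le' _ _) (by
      have := hBabs m x; have := hWm_abs m x; linarith)
  -- the key L¹ estimate for the symmetrized approximants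
  have hmσ : ∀ σ : Equiv.Perm (Fin k), Measurable (fun x : Fin k → S => x ∘ σ) := fun σ =>
    measurable_pi_lambda _ fun i => measurable_pi_apply (σ i)
  have hWmL1 : ∀ m, (∫ x, |B m x - Wm m x| ∂μ) ≤ ε m := by
    intro m
    have hint_term : ∀ σ : Equiv.Perm (Fin k),
        Integrable (fun x => |B m (x ∘ σ) - c m (x ∘ σ)|) μ := fun σ =>
      my_integrable_of_bounded ((((hBmeas m).comp (hmσ σ)).sub
        ((hccont m).measurable.comp (hmσ σ))).abs.aestronglyMeasurable) (C := 2 * m)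
        (fun x => by rw [abs_abs]; exact hBcbound m _)
    have key : ∀ x, |B m x - Wm m x|
        ≤ (∑ σ : Equiv.Perm (Fin k), |B m (x ∘ σ) - c m (x ∘ σ)|) / (k.factorial : ℝ) := by
      intro x
      have h1 : B m x - Wm m x
          = (∑ σ : Equiv.Perm (Fin k), (B m (x ∘ σ) - c m (x ∘ σ))) / (k.factorial : ℝ) := by
        rw [hWmdef]
        simp only
        rw [Finset.sum_sub_distrib]
        have h2 : ∑ σ : Equiv.Perm (Fin k), B m (x ∘ σ) = (k.factorial : ℝ) * B m x := by
          have : ∀ σ : Equiv.Perm (Fin k), B m (x ∘ σ) = B m x := fun σ => hBsymm m σ x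
          rw [Finset.sum_congr rfl fun σ _ => this σ, Finset.sum_const, Finset.card_univ,
            nsmul_eq_mul]
          exact_mod_cast congrArg (· * B m x) hcard
        rw [h2, sub_div, mul_div_cancel_left₀ _ hfacpos.ne']
      rw [h1, abs_div, abs_of_pos hfacpos]
      gcongr
      exact Finset.abs_sum_le_sum_abs _ _
    have hint1 : Integrable (fun x => |B m x - Wm m x|) μ :=
      my_integrable_of_bounded (((hBmeas m).sub (hWmmeas m)).abs.aestronglyMeasurable)
        (C := 2 * m) (fun x => by rw [abs_abs]; exact hBWm m x)
    have hint2 : Integrable (fun x =>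
        (∑ σ : Equiv.Perm (Fin k), |B m (x ∘ σ) - c m (x ∘ σ)|) / (k.factorial : ℝ)) μ :=
      (integrable_finset_sum _ fun σ _ => hint_term σ).div_const _
    calc (∫ x, |B m x - Wm m x| ∂μ)
        ≤ ∫ x, (∑ σ : Equiv.Perm (Fin k), |B m (x ∘ σ) - c m (x ∘ σ)|) / (k.factorial : ℝ) ∂μ :=
          integral_mono hint1 hint2 key
      _ = (∑ σ : Equiv.Perm (Fin k), ∫ x, |B m (x ∘ σ) - c m (x ∘ σ)| ∂μ) / (k.factorial : ℝ) := by
          rw [integral_div, integral_finset_sum _ fun σ _ => hint_term σ]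
      _ = (∑ _σ : Equiv.Perm (Fin k), ∫ x, |B m x - c m x| ∂μ) / (k.factorial : ℝ) := by
          congr 1
          exact Finset.sum_congr rfl fun σ _ =>
            my_integral_comp_perm α k σ (fun y => |B m y - c m y|)
      _ = ∫ x, |B m x - c m x| ∂μ := by
          rw [Finset.sum_const, Finset.card_univ, nsmul_eq_mul]
          rw [show ((Fintype.card (Equiv.Perm (Fin k)) : ℝ)) = (k.factorial : ℝ) from hcard]
          field_simp
      _ ≤ ε m := hcL1 m
  -- conclusion
  refine ⟨Wm, hWmcont, fun m => ⟨m, hWm_abs m⟩, hWmsymm, ?_⟩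
  intro lam hlam
  have h2lam : (0 : ℝ) < 2 * lam := by linarith
  -- integrability of the three families
  have hintA : ∀ m, Integrable (fun x => exp (2 * lam * |W x - B m x|)) μ := by
    intro m
    refine Integrable.mono' (hexp (2 * lam) h2lam)
      (((hWmeas.sub (hBmeas m)).abs.const_mul _).exp.aestronglyMeasurable)
      (ae_of_all _ fun x => ?_)
    rw [Real.norm_eq_abs, abs_of_pos (exp_pos _)]
    exact exp_le_exp.2 (mul_le_mul_of_nonneg_left (hBsub m x) h2lam.le)
  have hintC : ∀ m, Integrable (fun x => exp (2 * lam * |B m x - Wm m x|)) μ := by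
    intro m
    refine my_integrable_of_bounded
      ((((hBmeas m).sub (hWmmeas m)).abs.const_mul _).exp.aestronglyMeasurable)
      (C := exp (4 * lam * m)) (fun x => ?_)
    rw [abs_of_pos (exp_pos _)]
    refine exp_le_exp.2 ?_
    have := mul_le_mul_of_nonneg_left (hBWm m x) h2lam.le
    nlinarith
  have hintI : ∀ m, Integrable (fun x => exp (lam * |W x - Wm m x|)) μ := by
    intro m
    refine Integrable.mono' ((hexp lam hlam).const_mul (exp (lam * m)))
      (((hWmeas.sub (hWmmeas m)).abs.const_mul _).exp.aestronglyMeasurable)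
      (ae_of_all _ fun x => ?_)
    rw [Real.norm_eq_abs, abs_of_pos (exp_pos _), ← exp_add]
    refine exp_le_exp.2 ?_
    have h1 : |W x - Wm m x| ≤ |W x| + m :=
      le_trans (my_abs_sub_le' _ _) (by have := hWm_abs m x; linarith)
    have := mul_le_mul_of_nonneg_left h1 hlam.le
    nlinarith
  -- A_m → 1 by dominated convergence
  have hA : Tendsto (fun m => ∫ x, exp (2 * lam * |W x - B m x|) ∂μ) atTop (𝓝 1) := by
    have hdc := tendsto_integral_of_dominated_convergence (μ := μ)
      (F := fun m x => exp (2 * lam * |W x - B m x|)) (f := fun _ => (1 : ℝ))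
      (bound := fun x => exp (2 * lam * |W x|))
      (fun m => (((hWmeas.sub (hBmeas m)).abs.const_mul _).exp.aestronglyMeasurable))
      (hexp _ h2lam)
      (fun m => ae_of_all _ fun x => by
        rw [Real.norm_eq_abs, abs_of_pos (exp_pos _)]
        exact exp_le_exp.2 (mul_le_mul_of_nonneg_left (hBsub m x) h2lam.le))
      (ae_of_all _ fun x => by
        apply tendsto_const_nhds.congr'
        filter_upwards [eventually_ge_atTop ⌈|W x|⌉₊] with m hm
        have hWx : |W x| ≤ (m : ℝ) := le_trans (Nat.le_ceil _) (Nat.cast_le.2 hm)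
        rw [hBdef]
        simp only
        rw [my_clamp_eq hWx]
        simp)
    have h1 : ∫ _x, (1 : ℝ) ∂μ = 1 := by simp
    rwa [h1] at hdc
  -- bounds on C_m
  have hClb : ∀ m, 1 ≤ ∫ x, exp (2 * lam * |B m x - Wm m x|) ∂μ := by
    intro m
    have := integral_mono (integrable_const (1 : ℝ)) (hintC m)
      (fun x => one_le_exp (by positivity))
    simpa using this
  have hCub : ∀ m, (∫ x, exp (2 * lam * |B m x - Wm m x|) ∂μ)
      ≤ 1 + (2 * lam * exp (4 * lam * m)) * ε m := by
    intro m
    have hptw : ∀ x, exp (2 * lam * |B m x - Wm m x|)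
        ≤ 1 + (2 * lam * exp (4 * lam * m)) * |B m x - Wm m x| := by
      intro x
      have ht : 0 ≤ 2 * lam * |B m x - Wm m x| := by positivity
      have hT : 2 * lam * |B m x - Wm m x| ≤ 4 * lam * m := by
        have := mul_le_mul_of_nonneg_left (hBWm m x) h2lam.le
        nlinarith
      have := my_exp_le_one_add ht hT
      nlinarith [exp_pos (4 * lam * (m : ℝ))]
    have hintabs : Integrable (fun x => |B m x - Wm m x|) μ :=
      my_integrable_of_bounded (((hBmeas m).sub (hWmmeas m)).abs.aestronglyMeasurable)
        (C := 2 * m) (fun x => by rw [abs_abs]; exact hBWm m x)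
    calc (∫ x, exp (2 * lam * |B m x - Wm m x|) ∂μ)
        ≤ ∫ x, (1 + (2 * lam * exp (4 * lam * m)) * |B m x - Wm m x|) ∂μ :=
          integral_mono (hintC m) ((integrable_const 1).add (hintabs.const_mul _)) hptw
      _ = 1 + (2 * lam * exp (4 * lam * m)) * ∫ x, |B m x - Wm m x| ∂μ := by
          rw [integral_add (integrable_const 1) (hintabs.const_mul _), integral_const_mul]
          simp
      _ ≤ 1 + (2 * lam * exp (4 * lam * m)) * ε m := by
          have h := hWmL1 m
          have hc : 0 ≤ 2 * lam * exp (4 * lam * (m : ℝ)) := by positivity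
          nlinarith
  -- the error term tends to 0
  have hδ : Tendsto (fun m : ℕ => (2 * lam * exp (4 * lam * m)) * ε m) atTop (𝓝 0) := by
    have heq : ∀ m : ℕ, (2 * lam * exp (4 * lam * m)) * ε m
        = 2 * lam * exp (4 * lam * m - (4 * (m : ℝ) ^ 2 + m)) := by
      intro m
      rw [hεdef]
      simp only
      rw [sub_eq_add_neg, exp_add]
      ring
    have hexp0 : Tendsto (fun m : ℕ => exp (4 * lam * m - (4 * (m : ℝ) ^ 2 + m)))
        atTop (𝓝 0) := by
      apply Real.tendsto_exp_atBot.comp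
      apply tendsto_atBot_mono' atTop ?_ 
        (tendsto_neg_atTop_atBot.comp (tendsto_natCast_atTop_atTop (R := ℝ)))
      filter_upwards [eventually_ge_atTop ⌈lam⌉₊] with m hm
      have hlm : lam ≤ (m : ℝ) := le_trans (Nat.le_ceil _) (Nat.cast_le.2 hm)
      have hm0 : (0 : ℝ) ≤ m := Nat.cast_nonneg m
      simp only [Function.comp]
      nlinarith
    have := hexp0.const_mul (2 * lam)
    simp only [mul_zero] at this
    exact Tendsto.congr (fun m => (heq m).symm) this
  have hC : Tendsto (fun m => ∫ x, exp (2 * lam * |B m x - Wm m x|) ∂μ) atTop (𝓝 1) := by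
    refine tendsto_of_tendsto_of_tendsto_of_le_of_le tendsto_const_nhds ?_ hClb hCub
    have h1 := (tendsto_const_nhds (x := (1 : ℝ)) (f := (atTop : Filter ℕ))).add hδ
    rw [add_zero] at h1
    exact h1
  -- squeeze for I_m
  have hIlb : ∀ m, 1 ≤ ∫ x, exp (lam * |W x - Wm m x|) ∂μ := by
    intro m
    have := integral_mono (integrable_const (1 : ℝ)) (hintI m)
      (fun x => one_le_exp (by positivity))
    simpa using this
  have hIub : ∀ m, (∫ x, exp (lam * |W x - Wm m x|) ∂μ)
      ≤ ((∫ x, exp (2 * lam * |W x - B m x|) ∂μ)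
        + ∫ x, exp (2 * lam * |B m x - Wm m x|) ∂μ) / 2 := by
    intro m
    have hptw : ∀ x, exp (lam * |W x - Wm m x|)
        ≤ (exp (2 * lam * |W x - B m x|) + exp (2 * lam * |B m x - Wm m x|)) / 2 := by
      intro x
      have habs : |W x - Wm m x| ≤ |W x - B m x| + |B m x - Wm m x| := abs_sub_le _ _ _
      have h1 : exp (lam * |W x - Wm m x|)
          ≤ exp (lam * |W x - B m x|) * exp (lam * |B m x - Wm m x|) := by
        rw [← exp_add]
        refine exp_le_exp.2 ?_
        have := mul_le_mul_of_nonneg_left habs hlam.le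
        nlinarith
      have e1 : exp (2 * lam * |W x - B m x|)
          = exp (lam * |W x - B m x|) * exp (lam * |W x - B m x|) := by
        rw [← exp_add]; ring_nf
      have e2 : exp (2 * lam * |B m x - Wm m x|)
          = exp (lam * |B m x - Wm m x|) * exp (lam * |B m x - Wm m x|) := by
        rw [← exp_add]; ring_nf
      rw [e1, e2]
      nlinarith [sq_nonneg (exp (lam * |W x - B m x|) - exp (lam * |B m x - Wm m x|)),
        exp_pos (lam * |W x - B m x|), exp_pos (lam * |B m x - Wm m x|)]
    calc (∫ x, exp (lam * |W x - Wm m x|) ∂μ)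
        ≤ ∫ x, (exp (2 * lam * |W x - B m x|) + exp (2 * lam * |B m x - Wm m x|)) / 2 ∂μ :=
          integral_mono (hintI m) (((hintA m).add (hintC m)).div_const 2) hptw
      _ = ((∫ x, exp (2 * lam * |W x - B m x|) ∂μ)
          + ∫ x, exp (2 * lam * |B m x - Wm m x|) ∂μ) / 2 := by
          rw [integral_div, integral_add (hintA m) (hintC m)]
  have hI : Tendsto (fun m => ∫ x, exp (lam * |W x - Wm m x|) ∂μ) atTop (𝓝 1) := by
    refine tendsto_of_tendsto_of_tendsto_of_le_of_le tendsto_const_nhds ?_ hIlb hIub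
    have := (hA.add hC).div_const 2
    norm_num at this
    exact this
  have hlog := ((Real.continuousAt_log (by norm_num : (1 : ℝ) ≠ 0)).tendsto).comp hI
  rw [Real.log_one] at hlog
  exact hlog
end
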